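/- Let A be a set, f : A → ℝ a finitely supported function, and G an amenable group acting transitively on A. Then for every ε > 0 there exists a finitely supported probability measure μ on G such that ‖μ * f‖₁ ≤ ε + |Σ_{a∈A} f(a)|, where (μ * f)(x) = Σ_{g∈G} μ(g) f(g⁻¹·x). -/

import Mathlib

noncomputable section

open scoped symmDiff

open Classical in
/-- A group is amenable if it satisfies the Følner condition: finite subsets that are almost
invariant under any finite set of left translations. -/
def Amenable (G : Type*) [Group G] : Prop :=
  ∀ ε : ℝ, 0 < ε → ∀ S : Finset G, ∃ F : Finset G, F.Nonempty ∧
    ∀ s ∈ S, (((F.image fun x => s * x) ∆ F).card : ℝ) ≤ ε * F.card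

variable {G : Type*} [Group G] {A : Type*} [MulAction G A]

/-- ℓ¹-norm of a finitely supported real function. -/
def l1norm {α : Type*} (f : α →₀ ℝ) : ℝ := ∑ a ∈ f.support, |f a|

/-- The diffusion `(μ * f)(x) = Σ_g μ(g) f(g⁻¹ · x)` of a finitely supported function `f` on a
`G`-set `A` by a finitely supported measure `μ` on `G`. -/
def diffuse (μ : G →₀ ℝ) (f : A →₀ ℝ) : A →₀ ℝ :=
  μ.sum fun g m => m • Finsupp.mapDomain (fun a => g • a) f

lemma l1norm_eq_sum {α : Type*} (f : α →₀ ℝ) {T : Finset α} (h : f.support ⊆ T) :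
    l1norm f = ∑ a ∈ T, |f a| := by
  refine Finset.sum_subset h fun a _ ha => ?_
  simp [Finsupp.notMem_support_iff.mp ha]

lemma l1norm_nonneg {α : Type*} (f : α →₀ ℝ) : 0 ≤ l1norm f :=
  Finset.sum_nonneg fun _ _ => abs_nonneg _

lemma l1norm_add_le {α : Type*} (f g : α →₀ ℝ) : l1norm (f + g) ≤ l1norm f + l1norm g := by
  classical
  rw [l1norm_eq_sum (f + g) (T := f.support ∪ g.support) Finsupp.support_add,
      l1norm_eq_sum f Finset.subset_union_left,
      l1norm_eq_sum g Finset.subset_union_right, ← Finset.sum_add_distrib]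
  exact Finset.sum_le_sum fun a _ => by simpa using abs_add_le (f a) (g a)

lemma l1norm_smul {α : Type*} (c : ℝ) (f : α →₀ ℝ) : l1norm (c • f) = |c| * l1norm f := by
  classical
  rw [l1norm_eq_sum (c • f) (T := f.support) Finsupp.support_smul, l1norm, Finset.mul_sum]
  exact Finset.sum_congr rfl fun a _ => by simp [abs_mul]

lemma l1norm_sum_le {α ι : Type*} (T : Finset ι) (φ : ι → (α →₀ ℝ)) :
    l1norm (∑ i ∈ T, φ i) ≤ ∑ i ∈ T, l1norm (φ i) := by
  classical
  induction T using Finset.induction_on with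
  | empty => simp [l1norm]
  | insert _ _ h ih =>
    rw [Finset.sum_insert h, Finset.sum_insert h]
    exact (l1norm_add_le _ _).trans (by linarith)

lemma l1norm_single_le {α : Type*} (a : α) (b : ℝ) : l1norm (Finsupp.single a b) ≤ |b| := by
  classical
  rw [l1norm_eq_sum _ (T := {a}) Finsupp.support_single_subset]
  simp

lemma l1norm_sub_le {α : Type*} (f g : α →₀ ℝ) : l1norm (f - g) ≤ l1norm f + l1norm g := by
  have h : f - g = f + (-1 : ℝ) • g := by ext a; simp; ring
  rw [h]
  refine (l1norm_add_le _ _).trans ?_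
  rw [l1norm_smul]; simp

/-- **Gromov's diffusion lemma.** If an amenable group `G` acts transitively on a
set `A` and `f : A → ℝ` is finitely supported, then for every `ε > 0` there is a finitely
supported probability measure `μ` on `G` with `‖μ * f‖₁ ≤ ε + |Σ_a f(a)|`. -/
theorem diffusion_of_amenable_transitive (hG : Amenable G)
    (htrans : MulAction.IsPretransitive G A) (f : A →₀ ℝ) (ε : ℝ) (hε : 0 < ε) :
    ∃ μ : G →₀ ℝ, (∀ g, 0 ≤ μ g) ∧ (∑ g ∈ μ.support, μ g = 1) ∧
      l1norm (diffuse μ f) ≤ ε + |∑ a ∈ f.support, f a| := by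
  classical
  by_cases hf : f = 0
  · refine ⟨Finsupp.single 1 1, ?_, ?_, ?_⟩
    · intro g
      rw [Finsupp.single_apply]
      split <;> norm_num
    · rw [Finsupp.support_single_ne_zero _ one_ne_zero]
      simp
    · subst hf
      have : diffuse (Finsupp.single (1:G) (1:ℝ)) (0 : A →₀ ℝ) = 0 := by
        simp [diffuse]
      rw [this]
      simp [l1norm]
      positivity
  -- main case
  obtain ⟨a₀, ha₀⟩ : ∃ a, a ∈ f.support := (Finsupp.support_nonempty_iff.mpr hf)
  have hgex : ∀ a : A, ∃ g : G, g • a₀ = a := fun a => htrans.exists_smul_eq a₀ a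
  choose g hg using hgex
  set s := f.support with hs
  set M := l1norm f with hM
  have hMpos : 0 < M := by
    have h1 : |f a₀| ≤ M := Finset.single_le_sum (f := fun a => |f a|)
      (fun a _ => abs_nonneg _) ha₀
    have h2 : 0 < |f a₀| := abs_pos.mpr (Finsupp.mem_support_iff.mp ha₀)
    linarith
  set ε' := ε / M with hε'def
  have hε' : 0 < ε' := div_pos hε hMpos
  obtain ⟨F, hFne, hFol⟩ := hG ε' hε' (s.image fun a => (g a)⁻¹)
  have hn : 0 < (F.card : ℝ) := by exact_mod_cast Finset.card_pos.mpr hFne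
  set n : ℝ := (F.card : ℝ) with hndef
  set F' := F.image (·⁻¹) with hF'
  set μ : G →₀ ℝ := Finsupp.indicator F' (fun _ _ => n⁻¹) with hμ
  have hμval : ∀ g₀ ∈ F', μ g₀ = n⁻¹ := fun g₀ hg₀ => Finsupp.indicator_of_mem hg₀ _
  have hμnn : ∀ g₀, 0 ≤ μ g₀ := by
    intro g₀
    rw [hμ, Finsupp.indicator_apply]
    split <;> positivity
  have hsupp : μ.support ⊆ F' := by
    intro x hx
    by_contra hxF
    exact (Finsupp.mem_support_iff.mp hx) (Finsupp.indicator_of_notMem hxF _)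
  have hcardF' : (F'.card : ℝ) = n := by
    rw [hF', Finset.card_image_of_injective _ inv_injective, hndef]
  have hsum1 : ∑ g₀ ∈ μ.support, μ g₀ = 1 := by
    rw [Finset.sum_subset hsupp (fun x _ hx => Finsupp.notMem_support_iff.mp hx)]
    rw [Finset.sum_congr rfl hμval, Finset.sum_const, nsmul_eq_mul]
    rw [show ((F'.card : ℝ)) * n⁻¹ = 1 from by rw [hcardF']; field_simp]
  refine ⟨μ, hμnn, hsum1, ?_⟩
  -- the translate machinery
  set w : Finset G → (A →₀ ℝ) := fun T => ∑ k ∈ T, Finsupp.single (k⁻¹ • a₀) (1:ℝ) with hw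
  set T : A → Finset G := fun a => F.image (fun x => (g a)⁻¹ * x) with hT
  have key : diffuse μ f = ∑ a ∈ s, (n⁻¹ * f a) • w (T a) := by
    rw [diffuse, Finsupp.sum_of_support_subset _ hsupp _ (fun g₀ _ => by simp)]
    rw [hF', Finset.sum_image (fun x _ y _ h => inv_injective h)]
    have step1 : ∀ h ∈ F, μ h⁻¹ • Finsupp.mapDomain (fun a => h⁻¹ • a) f
        = ∑ a ∈ s, (n⁻¹ * f a) • Finsupp.single (h⁻¹ • a) (1:ℝ) := by
      intro h hh
      rw [hμval h⁻¹ (Finset.mem_image_of_mem _ hh)]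
      rw [Finsupp.mapDomain, Finsupp.sum, Finset.smul_sum]
      refine Finset.sum_congr rfl fun a _ => ?_
      simp [Finsupp.smul_single, smul_eq_mul]
    rw [Finset.sum_congr rfl step1, Finset.sum_comm]
    refine Finset.sum_congr rfl fun a _ => ?_
    rw [← Finset.smul_sum]
    congr 1
    show (∑ x ∈ F, Finsupp.single (x⁻¹ • a) (1:ℝ))
        = ∑ k ∈ F.image (fun x => (g a)⁻¹ * x), Finsupp.single (k⁻¹ • a₀) (1:ℝ)
    rw [Finset.sum_image (fun x _ y _ h => mul_left_cancel h)]
    refine Finset.sum_congr rfl fun h _ => ?_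
    congr 1
    rw [mul_inv_rev, inv_inv, mul_smul, hg a]
  -- bounds on w
  have hwcard : ∀ U : Finset G, l1norm (w U) ≤ (U.card : ℝ) := by
    intro U
    refine (l1norm_sum_le U _).trans ?_
    calc ∑ k ∈ U, l1norm (Finsupp.single (k⁻¹ • a₀) (1:ℝ))
        ≤ ∑ k ∈ U, 1 := Finset.sum_le_sum fun k _ => by
          simpa using l1norm_single_le (k⁻¹ • a₀) (1:ℝ)
      _ = (U.card : ℝ) := by simp
  have hwdiff : ∀ a ∈ s, l1norm (w (T a) - w F) ≤ ε' * n := by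
    intro a ha
    have h1 : w (T a) - w F = w (T a \ F) - w (F \ T a) := by
      simp only [hw]
      rw [Finset.sum_sdiff_sub_sum_sdiff]
    have hsd : (T a ∆ F).card = (T a \ F).card + (F \ T a).card := by
      rw [symmDiff_def, Finset.sup_eq_union, Finset.card_union_of_disjoint disjoint_sdiff_sdiff]
    calc l1norm (w (T a) - w F)
        ≤ l1norm (w (T a \ F)) + l1norm (w (F \ T a)) := by rw [h1]; exact l1norm_sub_le _ _
      _ ≤ ((T a \ F).card : ℝ) + ((F \ T a).card : ℝ) :=
          add_le_add (hwcard _) (hwcard _)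
      _ = ((T a ∆ F).card : ℝ) := by rw [hsd]; push_cast; ring
      _ ≤ ε' * n := hFol _ (Finset.mem_image_of_mem _ ha)
  -- split
  set c := ∑ a ∈ s, f a with hc
  have hsplit : diffuse μ f
      = (∑ a ∈ s, (n⁻¹ * f a) • (w (T a) - w F)) + (n⁻¹ * c) • w F := by
    rw [key]
    have : ∑ a ∈ s, (n⁻¹ * f a) • (w (T a) - w F)
        = (∑ a ∈ s, (n⁻¹ * f a) • w (T a)) - ∑ a ∈ s, (n⁻¹ * f a) • w F := by
      rw [← Finset.sum_sub_distrib]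
      exact Finset.sum_congr rfl fun a _ => smul_sub _ _ _
    rw [this]
    have : ∑ a ∈ s, (n⁻¹ * f a) • w F = (n⁻¹ * c) • w F := by
      rw [← Finset.sum_smul, hc, Finset.mul_sum]
    rw [this]
    abel
  rw [hsplit]
  refine (l1norm_add_le _ _).trans ?_
  have hbound1 : l1norm (∑ a ∈ s, (n⁻¹ * f a) • (w (T a) - w F)) ≤ ε := by
    refine (l1norm_sum_le _ _).trans ?_
    have : ∀ a ∈ s, l1norm ((n⁻¹ * f a) • (w (T a) - w F)) ≤ n⁻¹ * |f a| * (ε' * n) := by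
      intro a ha
      rw [l1norm_smul, abs_mul, abs_of_nonneg (by positivity : (0:ℝ) ≤ n⁻¹)]
      exact mul_le_mul_of_nonneg_left (hwdiff a ha) (by positivity)
    refine (Finset.sum_le_sum this).trans ?_
    have hMeq : ∑ a ∈ s, |f a| = M := rfl
    have : ∑ a ∈ s, n⁻¹ * |f a| * (ε' * n) = ε' * M := by
      rw [← Finset.sum_mul, ← Finset.mul_sum, hMeq]
      field_simp
    rw [this, hε'def]
    rw [div_mul_cancel₀ _ hMpos.ne']
  have hbound2 : l1norm ((n⁻¹ * c) • w F) ≤ |c| := by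
    rw [l1norm_smul, abs_mul, abs_of_nonneg (by positivity : (0:ℝ) ≤ n⁻¹)]
    calc n⁻¹ * |c| * l1norm (w F) ≤ n⁻¹ * |c| * n :=
          mul_le_mul_of_nonneg_left (hwcard F) (by positivity)
      _ = |c| := by field_simp
  have : |∑ a ∈ f.support, f a| = |c| := by rw [hc, hs]
  rw [this]
  linarith
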